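/- Let Δτ > 0, τ > 0, z > 0 and real numbers p̄ ≠ p^c be fixed, and let f, g : (0,1] → (0,1] be functions such that f(x) → 0 and g(x) → 0 as x → 0⁺, and such that g(x)·(log g(x) − log f(x)) → 0 as x → 0⁺ (for instance if |log g(x) − log f(x)| stays bounded). Then the tax-enforcement-parametrised optimal transfer price p*(x) := p̄ + ( Δτ/( f(x)·(1+z)·τ·(1+1/g(x)) ) )^{g(x)} · (p^c − p̄) tends to p^c as x → 0⁺; i.e. at the weakest tax enforcement the optimal transfer price converges to the least tolerable arm's-length price p^c. -/

import Mathlib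

open Real Set Filter Topology

/-- At the weakest tax enforcement the optimal transfer price converges to the least
tolerable arm's-length price `p^c`: if `f(x) → 0`, `g(x) → 0` and
`g(x)·(log g(x) − log f(x)) → 0` as `x → 0⁺`, then
`p*(x) = p̄ + (Δτ/(f(x)·(1+z)·τ·(1+1/g(x))))^{g(x)}·(p^c − p̄) → p^c`. -/
theorem stmt12 (Δτ τ z pbar pc : ℝ) (f g : ℝ → ℝ)
    (hΔτ : 0 < Δτ) (hτ : 0 < τ) (hz : 0 < z) (hne : pbar ≠ pc)
    (hfmem : ∀ x ∈ Set.Ioc (0 : ℝ) 1, f x ∈ Set.Ioc (0 : ℝ) 1)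
    (hgmem : ∀ x ∈ Set.Ioc (0 : ℝ) 1, g x ∈ Set.Ioc (0 : ℝ) 1)
    (hf0 : Filter.Tendsto f (nhdsWithin 0 (Set.Ioi 0)) (nhds 0))
    (hg0 : Filter.Tendsto g (nhdsWithin 0 (Set.Ioi 0)) (nhds 0))
    (hlog : Filter.Tendsto (fun x => g x * (Real.log (g x) - Real.log (f x)))
      (nhdsWithin 0 (Set.Ioi 0)) (nhds 0)) :
    Filter.Tendsto
      (fun x => pbar + (Δτ / (f x * (1 + z) * τ * (1 + 1 / g x))) ^ (g x) * (pc - pbar))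
      (nhdsWithin 0 (Set.Ioi 0)) (nhds pc) := by
  have hIoc : Set.Ioc (0 : ℝ) 1 ∈ nhdsWithin (0 : ℝ) (Set.Ioi 0) :=
    Ioc_mem_nhdsGT_of_mem (by constructor <;> norm_num)
  -- limit of the exponent
  have hexp : Filter.Tendsto
      (fun x => g x * (Real.log (g x) - Real.log (f x))
        + g x * (Real.log Δτ - Real.log (1 + z) - Real.log τ)
        - g x * Real.log (g x + 1))
      (nhdsWithin 0 (Set.Ioi 0)) (nhds 0) := by
    have h2 := hg0.mul_const (Real.log Δτ - Real.log (1 + z) - Real.log τ)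
    have hlg1 : Filter.Tendsto (fun x => Real.log (g x + 1))
        (nhdsWithin 0 (Set.Ioi 0)) (nhds 0) := by
      have h1 : Filter.Tendsto (fun x => g x + 1)
          (nhdsWithin 0 (Set.Ioi 0)) (nhds 1) := by
        simpa using hg0.add_const 1
      have := ((Real.continuousAt_log (by norm_num : (1:ℝ) ≠ 0)).tendsto).comp h1
      simpa [Function.comp_def] using this
    have h3 := hg0.mul hlg1
    have := (hlog.add h2).sub h3
    simpa using this
  have key : Filter.Tendsto
      (fun x => (Δτ / (f x * (1 + z) * τ * (1 + 1 / g x))) ^ (g x))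
      (nhdsWithin 0 (Set.Ioi 0)) (nhds 1) := by
    have hcomp := (Real.continuous_exp.tendsto 0).comp hexp
    rw [Real.exp_zero] at hcomp
    refine hcomp.congr' ?_
    filter_upwards [hIoc] with x hx
    have hfx := hfmem x hx
    have hgx := hgmem x hx
    have hf : 0 < f x := hfx.1
    have hg : 0 < g x := hgx.1
    have hg1 : (0:ℝ) < 1 + 1 / g x := by positivity
    have hz1 : (0:ℝ) < 1 + z := by linarith
    have hA : 0 < Δτ / (f x * (1 + z) * τ * (1 + 1 / g x)) := by positivity
    rw [Real.rpow_def_of_pos hA]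
    simp only [Function.comp_apply]
    rw [Real.exp_eq_exp]
    have h11 : (1 + 1 / g x) = (g x + 1) / g x := by field_simp
    rw [Real.log_div hΔτ.ne' (by positivity), h11,
      Real.log_mul (by positivity) (by positivity),
      Real.log_mul (by positivity) hτ.ne',
      Real.log_mul hf.ne' hz1.ne',
      Real.log_div (by positivity) hg.ne']
    ring
  have hfinal := (key.mul_const (pc - pbar)).const_add pbar
  have : pbar + 1 * (pc - pbar) = pc := by ring
  rwa [this] at hfinal
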